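/- Let A be the 2×2 matrix with integer entries and rows (a, b), (c, d), and set m = a² + c², n = b² + d², p = ab + cd. Assume n ≠ 1. Then there exists a nonzero vector v ∈ ℤ² with ‖Av‖ = ‖v‖ if and only if p² − (m − 1)(n − 1) is a perfect square (i.e., equals k² for some integer k). -/

import Mathlib

set_option maxHeartbeats 1000000 in
theorem norm_iff_aux (a b c d : ℤ) (v : Fin 2 → ℤ) :
    ‖Matrix.toEuclideanLin !![(a : ℝ), (b : ℝ); (c : ℝ), (d : ℝ)]
          ((WithLp.equiv 2 (Fin 2 → ℝ)).symm (fun i => (v i : ℝ)))‖ =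
        ‖(WithLp.equiv 2 (Fin 2 → ℝ)).symm (fun i => (v i : ℝ))‖ ↔
    (a * v 0 + b * v 1) ^ 2 + (c * v 0 + d * v 1) ^ 2 = (v 0) ^ 2 + (v 1) ^ 2 := by
  rw [Matrix.toEuclideanLin_apply]
  rw [EuclideanSpace.norm_eq, EuclideanSpace.norm_eq]
  simp only [Matrix.mulVec, dotProduct, Fin.sum_univ_two, WithLp.equiv_symm_apply,
    WithLp.ofLp_toLp, Matrix.cons_val', Matrix.cons_val_zero, Matrix.cons_val_one,
    Matrix.head_cons, Matrix.empty_val', Matrix.cons_val_fin_one, Matrix.head_fin_const,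
    Real.norm_eq_abs, sq_abs, Matrix.of_apply]
  rw [show ((Real.sqrt _ = Real.sqrt _) ↔ _) from Real.sqrt_inj (by positivity) (by positivity)]
  constructor
  · intro h; exact_mod_cast h
  · intro h; exact_mod_cast h

theorem stmt_5 (a b c d : ℤ) (m n p : ℤ)
    (hm : m = a ^ 2 + c ^ 2) (hn : n = b ^ 2 + d ^ 2) (hp : p = a * b + c * d)
    (hn1 : n ≠ 1) :
    (∃ v : Fin 2 → ℤ, v ≠ 0 ∧
      ‖Matrix.toEuclideanLin !![(a : ℝ), (b : ℝ); (c : ℝ), (d : ℝ)]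
          ((WithLp.equiv 2 (Fin 2 → ℝ)).symm (fun i => (v i : ℝ)))‖ =
        ‖(WithLp.equiv 2 (Fin 2 → ℝ)).symm (fun i => (v i : ℝ))‖) ↔
    ∃ k : ℤ, p ^ 2 - (m - 1) * (n - 1) = k ^ 2 := by
  subst hm hn hp
  constructor
  · rintro ⟨v, hv, hnorm⟩
    rw [norm_iff_aux] at hnorm
    set x := v 0 with hx
    set y := v 1 with hy
    -- quadratic form equation
    have hQ : (a ^ 2 + c ^ 2 - 1) * x ^ 2 + 2 * (a * b + c * d) * x * y
        + (b ^ 2 + d ^ 2 - 1) * y ^ 2 = 0 := by linear_combination hnorm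
    by_cases hy0 : y = 0
    · have hx0 : x ≠ 0 := by
        intro hx0
        apply hv
        funext i
        fin_cases i
        · exact hx0
        · exact hy0
      have hm1 : a ^ 2 + c ^ 2 - 1 = 0 := by
        have : (a ^ 2 + c ^ 2 - 1) * x ^ 2 = 0 := by linear_combination hQ - (2 * (a*b+c*d) * x + (b^2+d^2-1)*y) * hy0
        rcases mul_eq_zero.mp this with h | h
        · exact h
        · exact absurd (pow_eq_zero_iff two_ne_zero |>.mp h) hx0
      exact ⟨a * b + c * d, by linear_combination -(b ^ 2 + d ^ 2 - 1) * hm1⟩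
    · -- ((m-1)x + p y)^2 = s * y^2
      have key : ((a ^ 2 + c ^ 2 - 1) * x + (a * b + c * d) * y) ^ 2 =
          ((a * b + c * d) ^ 2 - (a ^ 2 + c ^ 2 - 1) * (b ^ 2 + d ^ 2 - 1)) * y ^ 2 := by
        linear_combination (a ^ 2 + c ^ 2 - 1) * hQ
      set w := (a ^ 2 + c ^ 2 - 1) * x + (a * b + c * d) * y with hw
      have hdvd : y ∣ w := by
        have h2 : y ^ 2 ∣ w ^ 2 := ⟨(a * b + c * d) ^ 2 - (a ^ 2 + c ^ 2 - 1) * (b ^ 2 + d ^ 2 - 1), by linear_combination key⟩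
        exact (Int.pow_dvd_pow_iff two_ne_zero).mp h2
      obtain ⟨k, hk⟩ := hdvd
      refine ⟨k, ?_⟩
      have hy2 : (y : ℤ) ^ 2 ≠ 0 := pow_ne_zero _ hy0
      have : ((a * b + c * d) ^ 2 - (a ^ 2 + c ^ 2 - 1) * (b ^ 2 + d ^ 2 - 1)) * y ^ 2
          = k ^ 2 * y ^ 2 := by
        rw [← key, hk]; ring
      exact mul_right_cancel₀ hy2 this
  · rintro ⟨k, hk⟩
    by_cases hm1 : a ^ 2 + c ^ 2 - 1 = 0
    · refine ⟨![1, 0], ?_, ?_⟩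
      · intro h
        have := congrFun h 0
        simp at this
      · rw [norm_iff_aux]
        simp only [Matrix.cons_val_zero, Matrix.cons_val_one, Matrix.head_cons]
        linear_combination hm1
    · refine ⟨![k - (a * b + c * d), a ^ 2 + c ^ 2 - 1], ?_, ?_⟩
      · intro h
        have := congrFun h 1
        simp at this
        exact hm1 this
      · rw [norm_iff_aux]
        simp only [Matrix.cons_val_zero, Matrix.cons_val_one, Matrix.head_cons]
        linear_combination -(a ^ 2 + c ^ 2 - 1) * hk
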